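/- (Robust linear chance constraint reformulation, scalarized) Let S be a symmetric positive definite real n̄×n̄ matrix, τ > 0, Γ ∈ ℝ^{n_ζ×n̄}, M ∈ ℝ^{n_x×n_ζ}, a ∈ ℝ^{n_x}, μ ∈ ℝ^{n_x}, and reals b, α, σ ≥ 0, p ∈ (0,1). Let η > 0 be such that the standard Gaussian measure N(0,1) assigns probability p to the set [η, ∞). Let X be a real random variable on a probability space with law equal to the Gaussian measure N(0, σ²). If aᵀμ + √τ·‖ΓᵀMᵀa‖_{S⁻¹} ≤ b − α and η·σ ≤ α, then for every ζ ∈ U = { Γz : zᵀSz ≤ τ }, the probability ℙ( aᵀ(μ + Mζ) + X > b ) ≤ p. -/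

import Mathlib

open Matrix MeasureTheory ProbabilityTheory

/-- Cauchy–Schwarz for dot products of real vectors. -/
lemma dotProduct_le_sqrt_mul_sqrt {n : ℕ} (x y : Fin n → ℝ) :
    x ⬝ᵥ y ≤ Real.sqrt (x ⬝ᵥ x) * Real.sqrt (y ⬝ᵥ y) := by
  have h := Finset.sum_mul_sq_le_sq_mul_sq Finset.univ x y
  calc x ⬝ᵥ y ≤ |x ⬝ᵥ y| := le_abs_self _
    _ = Real.sqrt ((x ⬝ᵥ y) ^ 2) := (Real.sqrt_sq_eq_abs _).symm
    _ ≤ Real.sqrt ((x ⬝ᵥ x) * (y ⬝ᵥ y)) := by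
        apply Real.sqrt_le_sqrt
        simpa [dotProduct, pow_two, mul_mul_mul_comm] using h
    _ = Real.sqrt (x ⬝ᵥ x) * Real.sqrt (y ⬝ᵥ y) := Real.sqrt_mul
        (by simpa [dotProduct, pow_two] using
          Finset.sum_nonneg fun i _ => mul_self_nonneg (x i)) _

/-- Weighted Cauchy–Schwarz: `v ⬝ z ≤ √(vᵀS⁻¹v) √(zᵀSz)` for `S` positive definite. -/
lemma dotProduct_le_weighted {n : ℕ} {S : Matrix (Fin n) (Fin n) ℝ} (hS : S.PosDef)
    (v z : Fin n → ℝ) :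
    v ⬝ᵥ z ≤ Real.sqrt (v ⬝ᵥ S⁻¹.mulVec v) * Real.sqrt (z ⬝ᵥ S.mulVec z) := by
  open scoped MatrixOrder in
  set R := CFC.sqrt S with hR
  have hRsym : Rᵀ = R := (CFC.sqrt_nonneg S).posSemidef.1
  have hRR : R * R = S := CFC.sqrt_mul_sqrt_self S hS.posSemidef.nonneg
  have hdetS : S.det ≠ 0 := ne_of_gt hS.det_pos
  have hdetR : R.det ≠ 0 := by
    intro h
    apply hdetS
    rw [← hRR, Matrix.det_mul, h, mul_zero]
  have hRinv : R⁻¹ * R = 1 := Matrix.nonsing_inv_mul R (isUnit_iff_ne_zero.mpr hdetR)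
  have hRinvT : (R⁻¹)ᵀ = R⁻¹ := by rw [Matrix.transpose_nonsing_inv, hRsym]
  set x := R⁻¹.mulVec v with hx
  set y := R.mulVec z with hy
  have hRinv' : R * R⁻¹ = 1 := Matrix.mul_nonsing_inv R (isUnit_iff_ne_zero.mpr hdetR)
  have hSsym : Sᵀ = S := hS.1
  have hSinvT : S⁻¹ᵀ = S⁻¹ := by rw [Matrix.transpose_nonsing_inv, hSsym]
  have hxy : x ⬝ᵥ y = v ⬝ᵥ z := by
    rw [hx, hy, Matrix.dotProduct_mulVec, ← Matrix.mulVec_transpose, hRsym,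
      Matrix.mulVec_mulVec, hRinv', Matrix.one_mulVec]
  have hxx : x ⬝ᵥ x = v ⬝ᵥ S⁻¹.mulVec v := by
    rw [hx, Matrix.dotProduct_mulVec, ← Matrix.mulVec_transpose, hRinvT,
      Matrix.mulVec_mulVec, ← Matrix.mul_inv_rev, hRR, Matrix.dotProduct_mulVec,
      ← Matrix.mulVec_transpose, hSinvT]
  have hyy : y ⬝ᵥ y = z ⬝ᵥ S.mulVec z := by
    rw [hy, Matrix.dotProduct_mulVec, ← Matrix.mulVec_transpose, hRsym,
      Matrix.mulVec_mulVec, hRR, dotProduct_comm]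
  calc v ⬝ᵥ z = x ⬝ᵥ y := hxy.symm
    _ ≤ Real.sqrt (x ⬝ᵥ x) * Real.sqrt (y ⬝ᵥ y) := dotProduct_le_sqrt_mul_sqrt x y
    _ = _ := by rw [hxx, hyy]

/-- Robust linear chance constraint reformulation (scalarized): if
`aᵀμ + √τ·‖ΓᵀMᵀa‖_{S⁻¹} ≤ b − α` and `η·σ ≤ α`, where `η` is the upper `p`-quantile
of the standard Gaussian and `X ~ N(0, σ²)`, then for every `ζ ∈ U`,
`ℙ(aᵀ(μ + Mζ) + X > b) ≤ p`. -/
theorem stmt_14 {nζ nbar nx : ℕ}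
    {Ω : Type*} [MeasurableSpace Ω] (P : Measure Ω) [IsProbabilityMeasure P]
    (S : Matrix (Fin nbar) (Fin nbar) ℝ) (hS : S.PosDef)
    (τ : ℝ) (hτ : 0 < τ)
    (Γ : Matrix (Fin nζ) (Fin nbar) ℝ) (M : Matrix (Fin nx) (Fin nζ) ℝ)
    (a μ : Fin nx → ℝ) (b α σ p η : ℝ)
    (hσ : 0 ≤ σ) (hp0 : 0 < p) (hp1 : p < 1) (hη : 0 < η)
    (hηp : gaussianReal 0 1 (Set.Ici η) = ENNReal.ofReal p)
    (X : Ω → ℝ)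
    (hX : P.map X = gaussianReal 0 ⟨σ ^ 2, sq_nonneg σ⟩)
    (h1 : a ⬝ᵥ μ + Real.sqrt τ *
        Real.sqrt ((Γᵀ.mulVec (Mᵀ.mulVec a)) ⬝ᵥ
          S⁻¹.mulVec (Γᵀ.mulVec (Mᵀ.mulVec a))) ≤ b - α)
    (h2 : η * σ ≤ α) :
    ∀ z : Fin nbar → ℝ, z ⬝ᵥ S.mulVec z ≤ τ →
      P {ω | a ⬝ᵥ (μ + M.mulVec (Γ.mulVec z)) + X ω > b} ≤ ENNReal.ofReal p := by
  intro z hz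
  set v := Γᵀ.mulVec (Mᵀ.mulVec a) with hv
  -- Step 1: deterministic bound
  have hdot : a ⬝ᵥ M.mulVec (Γ.mulVec z) = v ⬝ᵥ z := by
    rw [hv, Matrix.dotProduct_mulVec, Matrix.dotProduct_mulVec,
      ← Matrix.mulVec_transpose, ← Matrix.mulVec_transpose]
  have hcs : v ⬝ᵥ z ≤ Real.sqrt (v ⬝ᵥ S⁻¹.mulVec v) * Real.sqrt τ := by
    refine (dotProduct_le_weighted hS v z).trans ?_
    exact mul_le_mul_of_nonneg_left (Real.sqrt_le_sqrt hz) (Real.sqrt_nonneg _)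
  have hc : a ⬝ᵥ (μ + M.mulVec (Γ.mulVec z)) ≤ b - α := by
    rw [dotProduct_add, hdot]
    calc a ⬝ᵥ μ + v ⬝ᵥ z
        ≤ a ⬝ᵥ μ + Real.sqrt (v ⬝ᵥ S⁻¹.mulVec v) * Real.sqrt τ :=
          add_le_add_right hcs _
      _ = a ⬝ᵥ μ + Real.sqrt τ * Real.sqrt (v ⬝ᵥ S⁻¹.mulVec v) := by ring
      _ ≤ b - α := h1
  -- Step 2: measurability of X
  have hXm : AEMeasurable X P := by
    refine aemeasurable_of_map_neZero ?_
    rw [hX]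
    exact ⟨(instIsProbabilityMeasureGaussianReal _ _).ne_zero⟩
  -- Step 3: containment in {X > η σ}
  have hsub : {ω | a ⬝ᵥ (μ + M.mulVec (Γ.mulVec z)) + X ω > b}
      ⊆ X ⁻¹' (Set.Ioi (η * σ)) := by
    intro ω hω
    simp only [Set.mem_setOf_eq] at hω
    have : X ω > b - a ⬝ᵥ (μ + M.mulVec (Γ.mulVec z)) := by linarith
    have hα : α ≤ b - a ⬝ᵥ (μ + M.mulVec (Γ.mulVec z)) := by linarith
    simp only [Set.mem_preimage, Set.mem_Ioi]
    linarith
  refine (measure_mono hsub).trans ?_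
  have hmap : P (X ⁻¹' Set.Ioi (η * σ)) = gaussianReal 0 ⟨σ ^ 2, sq_nonneg σ⟩
      (Set.Ioi (η * σ)) := by
    rw [← hX, Measure.map_apply_of_aemeasurable hXm measurableSet_Ioi]
  rw [hmap]
  rcases eq_or_lt_of_le hσ with hσ0 | hσ0
  · -- σ = 0
    have : (⟨σ ^ 2, sq_nonneg σ⟩ : NNReal) = 0 := by
      ext; simp [← hσ0]
    rw [show gaussianReal 0 ⟨σ ^ 2, sq_nonneg σ⟩ = gaussianReal 0 0 from congrArg _ this, gaussianReal_zero_var, Measure.dirac_apply' _ measurableSet_Ioi]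
    have : (0 : ℝ) ∉ Set.Ioi (η * σ) := by
      simp [← hσ0]
    simp [Set.indicator_of_notMem this]
  · -- σ > 0
    have hmap2 : gaussianReal 0 ⟨σ ^ 2, sq_nonneg σ⟩
        = (gaussianReal 0 1).map (σ * ·) := by
      rw [gaussianReal_map_const_mul]
      norm_num
      rfl
    rw [hmap2, Measure.map_apply (measurable_const_mul σ) measurableSet_Ioi]
    have hpre : (fun x => σ * x) ⁻¹' Set.Ioi (η * σ) = Set.Ioi η := by
      ext x
      simp only [Set.mem_preimage, Set.mem_Ioi]
      rw [mul_comm η σ]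
      exact mul_lt_mul_iff_right₀ hσ0
    rw [hpre, ← hηp]
    exact measure_mono Set.Ioi_subset_Ici_self
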